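/- arXiv:1905.06661 — 3 statements merged into one kernel-verified Lean document; each statement's English description precedes it below -/
import Mathlib

section
/- Suppose 1 > p > q > 0. Let t = (1/2)·log(p(1-q)/(q(1-p))). Then (p-q)(1+p-q)/(2(1-q)p) < t < (p-q)(1-p+q)/(2(1-p)q). -/
theorem t_bounds (p q : ℝ) (hq : 0 < q) (hpq : q < p) (hp : p < 1) :
    (p - q) * (1 + p - q) / (2 * (1 - q) * p)
      < (1 / 2) * Real.log (p * (1 - q) / (q * (1 - p))) ∧
    (1 / 2) * Real.log (p * (1 - q) / (q * (1 - p)))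
      < (p - q) * (1 - p + q) / (2 * (1 - p) * q) := by
  have hp0 : 0 < p := hq.trans hpq
  have h1p : 0 < 1 - p := by linarith
  have h1q : 0 < 1 - q := by linarith
  have hd : 0 < p - q := by linarith
  have key : p * (1 - q) / (q * (1 - p)) = (p / q) * ((1 - q) / (1 - p)) := by
    field_simp
  rw [key, Real.log_mul (by positivity) (by positivity)]
  -- upper bounds on logs
  have ua : Real.log (p / q) < (p - q) / q := by
    have := Real.log_lt_sub_one_of_pos (x := p / q) (by positivity)
      (by intro h; rw [div_eq_one_iff_eq hq.ne'] at h; linarith)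
    have e : p / q - 1 = (p - q) / q := by field_simp
    linarith [e ▸ this]
  have ub : Real.log ((1 - q) / (1 - p)) < (p - q) / (1 - p) := by
    have := Real.log_lt_sub_one_of_pos (x := (1 - q) / (1 - p)) (by positivity)
      (by intro h; rw [div_eq_one_iff_eq h1p.ne'] at h; linarith)
    have e : (1 - q) / (1 - p) - 1 = (p - q) / (1 - p) := by field_simp; ring
    linarith [e ▸ this]
  -- lower bounds on logs
  have la : (p - q) / p < Real.log (p / q) := by
    have := Real.log_lt_sub_one_of_pos (x := q / p) (by positivity)
      (by intro h; rw [div_eq_one_iff_eq hp0.ne'] at h; linarith)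
    have e : Real.log (q / p) = - Real.log (p / q) := by
      rw [Real.log_div hq.ne' hp0.ne', Real.log_div hp0.ne' hq.ne']; ring
    have e2 : q / p - 1 = -((p - q) / p) := by field_simp; ring
    rw [e, e2] at this
    linarith
  have lb : (p - q) / (1 - q) < Real.log ((1 - q) / (1 - p)) := by
    have := Real.log_lt_sub_one_of_pos (x := (1 - p) / (1 - q)) (by positivity)
      (by intro h; rw [div_eq_one_iff_eq h1q.ne'] at h; linarith)
    have e : Real.log ((1 - p) / (1 - q)) = - Real.log ((1 - q) / (1 - p)) := by
      rw [Real.log_div h1p.ne' h1q.ne', Real.log_div h1q.ne' h1p.ne']; ring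
    have e2 : (1 - p) / (1 - q) - 1 = -((p - q) / (1 - q)) := by field_simp; ring
    rw [e, e2] at this
    linarith
  constructor
  · have e : (p - q) * (1 + p - q) / (2 * (1 - q) * p)
        = (1 / 2) * ((p - q) / p + (p - q) / (1 - q)) := by field_simp; ring
    rw [e]; linarith
  · have e : (p - q) * (1 - p + q) / (2 * (1 - p) * q)
        = (1 / 2) * ((p - q) / q + (p - q) / (1 - p)) := by field_simp
    rw [e]; linarith
end

section
/- Suppose 1 > p > q > 0. Let λ = log((1-q)/(1-p)) / (log(p/q) + log((1-q)/(1-p))). Then q < λ < p. -/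
theorem lambda_bounds (p q : ℝ) (hq : 0 < q) (hpq : q < p) (hp : p < 1) :
    q < Real.log ((1 - q) / (1 - p)) /
        (Real.log (p / q) + Real.log ((1 - q) / (1 - p))) ∧
    Real.log ((1 - q) / (1 - p)) /
        (Real.log (p / q) + Real.log ((1 - q) / (1 - p))) < p := by
  have hp0 : 0 < p := hq.trans hpq
  have hq1 : 0 < 1 - p := by linarith
  have hp1 : 0 < 1 - q := by linarith
  have lA : Real.log (p / q) = Real.log p - Real.log q :=
    Real.log_div (ne_of_gt hp0) (ne_of_gt hq)
  have lL : Real.log ((1 - q) / (1 - p)) = Real.log (1 - q) - Real.log (1 - p) :=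
    Real.log_div (ne_of_gt hp1) (ne_of_gt hq1)
  set a := Real.log p
  set b := Real.log q
  set c := Real.log (1 - q)
  set d := Real.log (1 - p)
  have hab : b < a := Real.log_lt_log hq hpq
  have hcd : d < c := Real.log_lt_log hq1 (by linarith)
  -- log inequalities
  have b1 : a - b < p / q - 1 := by
    have := Real.log_lt_sub_one_of_pos (show (0:ℝ) < p / q by positivity)
      (ne_of_gt ((one_lt_div hq).mpr hpq))
    rwa [lA] at this
  have b2 : c - d < (1 - q) / (1 - p) - 1 := by
    have := Real.log_lt_sub_one_of_pos (show (0:ℝ) < (1 - q) / (1 - p) by positivity)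
      (ne_of_gt ((one_lt_div hq1).mpr (by linarith)))
    rwa [lL] at this
  have b3 : b - a < q / p - 1 := by
    have := Real.log_lt_sub_one_of_pos (show (0:ℝ) < q / p by positivity)
      (ne_of_lt ((div_lt_one hp0).mpr hpq))
    rwa [Real.log_div (ne_of_gt hq) (ne_of_gt hp0)] at this
  have b4 : d - c < (1 - p) / (1 - q) - 1 := by
    have := Real.log_lt_sub_one_of_pos (show (0:ℝ) < (1 - p) / (1 - q) by positivity)
      (ne_of_lt ((div_lt_one hp1).mpr (by linarith)))
    rwa [Real.log_div (ne_of_gt hq1) (ne_of_gt hp1)] at this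
  have e1 : q * (p / q - 1) = p - q := by field_simp
  have e2 : (1 - p) * ((1 - q) / (1 - p) - 1) = p - q := by field_simp; ring
  have e3 : p * (q / p - 1) = q - p := by field_simp
  have e4 : (1 - q) * ((1 - p) / (1 - q) - 1) = q - p := by field_simp; ring
  have k1 : q * (a - b) < p - q := by nlinarith [mul_lt_mul_of_pos_left b1 hq]
  have k2 : (1 - p) * (c - d) < p - q := by nlinarith [mul_lt_mul_of_pos_left b2 hq1]
  have k3 : p * (b - a) < q - p := by nlinarith [mul_lt_mul_of_pos_left b3 hp0]
  have k4 : (1 - q) * (d - c) < q - p := by nlinarith [mul_lt_mul_of_pos_left b4 hp1]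
  rw [lA, lL]
  have hden : 0 < a - b + (c - d) := by linarith
  constructor
  · rw [lt_div_iff₀ hden]; nlinarith
  · rw [div_lt_iff₀ hden]; nlinarith
end

section
/- Suppose 0 < q < p < 1 and let λ = log((1-q)/(1-p)) / (log(p/q) + log((1-q)/(1-p))). Then λ ≥ (p - q) / (log(p/q) + (p - q)). -/
theorem lambda_lower_bound (p q : ℝ) (hq : 0 < q) (hpq : q < p) (hp : p < 1) :
    Real.log ((1 - q) / (1 - p)) /
        (Real.log (p / q) + Real.log ((1 - q) / (1 - p)))
      ≥ (p - q) / (Real.log (p / q) + (p - q)) := by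
  have h1p : (0:ℝ) < 1 - p := by linarith
  have h1q : (0:ℝ) < 1 - q := by linarith
  have hA : 0 < Real.log (p / q) := by
    apply Real.log_pos
    rw [lt_div_iff₀ hq]; linarith
  have hBd : p - q < Real.log ((1 - q) / (1 - p)) := by
    have h := Real.log_le_sub_one_of_pos (show (0:ℝ) < (1 - p) / (1 - q) by positivity)
    have hlog : Real.log ((1 - p) / (1 - q)) = - Real.log ((1 - q) / (1 - p)) := by
      rw [← Real.log_inv, inv_div]
    rw [hlog, div_sub_one (ne_of_gt h1q)] at h
    have h2 : (p - q) / (1 - q) ≤ Real.log ((1 - q) / (1 - p)) := by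
      have := neg_le_neg h
      rw [neg_neg] at this
      calc (p - q) / (1 - q) = -((1 - p - (1 - q)) / (1 - q)) := by ring_nf
        _ ≤ Real.log ((1 - q) / (1 - p)) := this
    have h3 : p - q < (p - q) / (1 - q) := by
      rw [lt_div_iff₀ h1q]
      nlinarith
    linarith
  have hB : 0 < Real.log ((1 - q) / (1 - p)) := by linarith
  rw [ge_iff_le, div_le_div_iff₀ (by linarith) (by linarith)]
  nlinarith
end
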